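/- Define g : (0,1) → ℝ by g(μ) = π − √(1/μ² − 1) + arccos μ. Then g is differentiable with g'(μ) = √(1 − μ²)/μ² > 0, so g is strictly increasing on (0,1), and there exists a unique μ_crit ∈ (0,1) with g(μ_crit) = 0; moreover 0.217 < μ_crit < 0.218, g(μ) < 0 for μ < μ_crit, and g(μ) > 0 for μ > μ_crit. -/

import Mathlib

open Real Set

private lemma deriv_aux {μ : ℝ} (h0 : 0 < μ) (h1 : μ < 1) :
    HasDerivAt (fun x : ℝ => Real.pi - Real.sqrt (1 / x ^ 2 - 1) + Real.arccos x)
      (Real.sqrt (1 - μ ^ 2) / μ ^ 2) μ := by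
  have hμ2 : (0:ℝ) < μ ^ 2 := by positivity
  have hμ21 : μ ^ 2 < 1 := by nlinarith
  have hu : (0:ℝ) < 1 / μ ^ 2 - 1 := by
    rw [sub_pos, lt_div_iff₀ hμ2]; linarith
  have hs : (0:ℝ) < Real.sqrt (1 - μ ^ 2) := Real.sqrt_pos.mpr (by linarith)
  have hs2 : Real.sqrt (1 - μ ^ 2) ^ 2 = 1 - μ ^ 2 := Real.sq_sqrt (by linarith)
  -- inner function
  have hinner : HasDerivAt (fun x : ℝ => 1 / x ^ 2 - 1) (-(2 * μ) / (μ ^ 2) ^ 2) μ := by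
    have h : HasDerivAt (fun x : ℝ => x ^ 2) (2 * μ) μ := by
      simpa using (hasDerivAt_pow 2 μ)
    simpa [one_div] using (h.inv (ne_of_gt hμ2)).sub_const 1
  have hsqrt : HasDerivAt (fun x : ℝ => Real.sqrt (1 / x ^ 2 - 1))
      (1 / (2 * Real.sqrt (1 / μ ^ 2 - 1)) * (-(2 * μ) / (μ ^ 2) ^ 2)) μ :=
    (Real.hasDerivAt_sqrt (ne_of_gt hu)).comp μ hinner
  have harccos : HasDerivAt Real.arccos (-(1 / Real.sqrt (1 - μ ^ 2))) μ :=
    Real.hasDerivAt_arccos (by linarith) (ne_of_lt h1)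
  have h := ((hasDerivAt_const μ Real.pi).sub hsqrt).add harccos
  refine h.congr_deriv ?_
  symm
  -- algebra: 0 - (1/(2√u) * (-(2μ)/μ⁴)) + (-(1/√(1-μ²))) = √(1-μ²)/μ²
  have husq : Real.sqrt (1 / μ ^ 2 - 1) = Real.sqrt (1 - μ ^ 2) / μ := by
    have : 1 / μ ^ 2 - 1 = (1 - μ ^ 2) / μ ^ 2 := by field_simp
    rw [this, Real.sqrt_div (by linarith), Real.sqrt_sq h0.le]
  rw [husq]
  field_simp
  linear_combination hs2

private lemma arcsin_lb : (0.217 : ℝ) < Real.arcsin 0.217 := by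
  have h1 : Real.sin (Real.arcsin 0.217) = 0.217 := Real.sin_arcsin (by norm_num) (by norm_num)
  have h2 : 0 < Real.arcsin (0.217 : ℝ) := Real.arcsin_pos.mpr (by norm_num)
  have := Real.sin_lt h2
  linarith [this, h1.symm ▸ this]

private lemma arcsin_ub : Real.arcsin 0.218 ≤ (0.2215 : ℝ) := by
  have hsin : (0.218 : ℝ) ≤ Real.sin 0.2215 := by
    have := Real.sin_gt_sub_cube (by norm_num : (0:ℝ) < 0.2215)
    norm_num at this ⊢; linarith
  calc Real.arcsin 0.218 ≤ Real.arcsin (Real.sin 0.2215) := Real.monotone_arcsin hsin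
    _ = 0.2215 := Real.arcsin_sin (by norm_num; linarith [Real.pi_gt_d6]) (by norm_num; linarith [Real.pi_gt_d6])

private lemma g_neg : Real.pi - Real.sqrt (1 / (0.217:ℝ) ^ 2 - 1) + Real.arccos 0.217 < 0 := by
  rw [Real.arccos_eq_pi_div_two_sub_arcsin]
  have hsq : (4.49539 : ℝ) < Real.sqrt (1 / (0.217:ℝ) ^ 2 - 1) := by
    rw [Real.lt_sqrt (by norm_num)]; norm_num
  have hpi := Real.pi_lt_d6
  have := arcsin_lb
  linarith

private lemma g_pos : 0 < Real.pi - Real.sqrt (1 / (0.218:ℝ) ^ 2 - 1) + Real.arccos 0.218 := by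
  rw [Real.arccos_eq_pi_div_two_sub_arcsin]
  have hsq : Real.sqrt (1 / (0.218:ℝ) ^ 2 - 1) < 4.4908 := by
    rw [Real.sqrt_lt' (by norm_num)]; norm_num
  have hpi := Real.pi_gt_d6
  have := arcsin_ub
  linarith

theorem stmt_4 (g : ℝ → ℝ)
    (hg : ∀ μ : ℝ, g μ = Real.pi - Real.sqrt (1 / μ ^ 2 - 1) + Real.arccos μ) :
    (∀ μ ∈ Set.Ioo (0 : ℝ) 1,
        HasDerivAt g (Real.sqrt (1 - μ ^ 2) / μ ^ 2) μ ∧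
        0 < Real.sqrt (1 - μ ^ 2) / μ ^ 2) ∧
    StrictMonoOn g (Set.Ioo (0 : ℝ) 1) ∧
    (∃! μc : ℝ, μc ∈ Set.Ioo (0 : ℝ) 1 ∧ g μc = 0) ∧
    (∀ μc : ℝ, μc ∈ Set.Ioo (0 : ℝ) 1 → g μc = 0 →
        0.217 < μc ∧ μc < 0.218 ∧
        ∀ μ ∈ Set.Ioo (0 : ℝ) 1, (μ < μc → g μ < 0) ∧ (μc < μ → 0 < g μ)) := by
  have hgeq : g = fun μ : ℝ => Real.pi - Real.sqrt (1 / μ ^ 2 - 1) + Real.arccos μ :=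
    funext hg
  subst hgeq
  set g : ℝ → ℝ := fun μ : ℝ => Real.pi - Real.sqrt (1 / μ ^ 2 - 1) + Real.arccos μ with hgdef
  have hderiv : ∀ μ ∈ Set.Ioo (0 : ℝ) 1,
      HasDerivAt g (Real.sqrt (1 - μ ^ 2) / μ ^ 2) μ ∧ 0 < Real.sqrt (1 - μ ^ 2) / μ ^ 2 := by
    intro μ hμ
    obtain ⟨h0, h1⟩ := hμ
    refine ⟨deriv_aux h0 h1, ?_⟩
    have : (0:ℝ) < Real.sqrt (1 - μ ^ 2) := Real.sqrt_pos.mpr (by nlinarith)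
    positivity
  have hmono : StrictMonoOn g (Set.Ioo (0 : ℝ) 1) := by
    apply strictMonoOn_of_deriv_pos (convex_Ioo 0 1)
    · intro x hx
      exact ((hderiv x hx).1).continuousAt.continuousWithinAt
    · intro x hx
      rw [interior_Ioo] at hx
      rw [(hderiv x hx).1.deriv]
      exact (hderiv x hx).2
  have hm1 : (0.217:ℝ) ∈ Set.Ioo (0:ℝ) 1 := by norm_num
  have hm2 : (0.218:ℝ) ∈ Set.Ioo (0:ℝ) 1 := by norm_num
  have hcont : ContinuousOn g (Set.Icc (0.217:ℝ) 0.218) := by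
    intro x hx
    have hx' : x ∈ Set.Ioo (0:ℝ) 1 := ⟨by linarith [hx.1], by linarith [hx.2]⟩
    exact ((hderiv x hx').1).continuousAt.continuousWithinAt
  have hivt := intermediate_value_Ioo (by norm_num : (0.217:ℝ) ≤ 0.218) hcont
  have hgneg : g 0.217 < 0 := g_neg
  have hgpos : 0 < g 0.218 := g_pos
  have h0mem : (0:ℝ) ∈ Set.Ioo (g 0.217) (g 0.218) := ⟨hgneg, hgpos⟩
  obtain ⟨μc, hμcmem, hμc0⟩ := hivt h0mem
  have hμcIoo : μc ∈ Set.Ioo (0:ℝ) 1 := ⟨by linarith [hμcmem.1], by linarith [hμcmem.2]⟩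
  refine ⟨hderiv, hmono, ⟨μc, ⟨hμcIoo, hμc0⟩, ?_⟩, ?_⟩
  · rintro y ⟨hy, hy0⟩
    exact hmono.injOn hy hμcIoo (by rw [hy0, hμc0])
  · intro x hx hx0
    have hbounds : 0.217 < x ∧ x < 0.218 := by
      constructor
      · by_contra h
        push_neg at h
        rcases eq_or_lt_of_le h with h' | h'
        · exact absurd (h' ▸ hx0) (ne_of_lt hgneg)
        · have := hmono hx hm1 h'
          rw [hx0] at this
          linarith
      · by_contra h
        push_neg at h
        rcases eq_or_lt_of_le h with h' | h'
        · exact absurd (h' ▸ hx0) (ne_of_gt hgpos)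
        · have := hmono hm2 hx h'
          rw [hx0] at this
          linarith
    refine ⟨hbounds.1, hbounds.2, ?_⟩
    intro μ hμ
    constructor
    · intro hlt
      have := hmono hμ hx hlt
      rw [hx0] at this; exact this
    · intro hlt
      have := hmono hx hμ hlt
      rw [hx0] at this; exact this
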